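/- For any real α > -1, the function u(x,y) = y^{α+1}/(|x|²+y²)^{(α+n+1)/2} satisfies the weighted Laplace equation Δ_x u + ∂²u/∂y² - (α/y)·∂u/∂y = 0 at every point (x,y) ∈ ℝⁿ × (0,∞). -/

import Mathlib

open Real MeasureTheory

lemma xsecond (C r2 a y β : ℝ) (hpos : ∀ s : ℝ, 0 < r2 + 2*a*s + s^2 + y^2) :
    iteratedDeriv 2 (fun s : ℝ => C / (r2 + 2*a*s + s^2 + y^2) ^ β) 0
      = C * (2*(-β) * (r2+y^2)^(-β-1) + 4*a^2*β*(β+1)*(r2+y^2)^(-β-2)) := by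
  have hq : ∀ s : ℝ, HasDerivAt (fun s : ℝ => r2 + 2*a*s + s^2 + y^2) (2*a + 2*s) s := by
    intro s
    have h := ((((hasDerivAt_id s).const_mul (2*a)).const_add r2).add (hasDerivAt_pow 2 s)).add_const (y^2)
    refine h.congr_deriv ?_
    norm_num
  have hfun : (fun s : ℝ => C / (r2 + 2*a*s + s^2 + y^2) ^ β)
      = fun s : ℝ => C * (r2 + 2*a*s + s^2 + y^2) ^ (-β) := by
    funext s
    rw [Real.rpow_neg (hpos s).le, div_eq_mul_inv]
  rw [hfun]
  have hd1 : ∀ s : ℝ, HasDerivAt (fun s : ℝ => C * (r2 + 2*a*s + s^2 + y^2) ^ (-β))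
      (C * ((2*a + 2*s) * (-β) * (r2 + 2*a*s + s^2 + y^2) ^ (-β-1))) s := by
    intro s
    exact ((hq s).rpow_const (Or.inl (hpos s).ne')).const_mul C
  have hD : deriv (fun s : ℝ => C * (r2 + 2*a*s + s^2 + y^2) ^ (-β))
      = fun s : ℝ => C * ((2*a + 2*s) * (-β) * (r2 + 2*a*s + s^2 + y^2) ^ (-β-1)) :=
    funext fun s => (hd1 s).deriv
  have h2 : HasDerivAt (fun s : ℝ => C * ((2*a + 2*s) * (-β) * (r2 + 2*a*s + s^2 + y^2) ^ (-β-1)))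
      (C * (2*(-β) * ((r2 + 2*a*0 + 0^2 + y^2) ^ (-β-1))
        + ((2*a + 2*0)*(-β)) * ((2*a + 2*0) * (-β-1) * (r2 + 2*a*0 + 0^2 + y^2) ^ (-β-1-1)))) 0 := by
    have h1 : HasDerivAt (fun s : ℝ => (2*a + 2*s) * (-β)) (2*(-β)) 0 := by
      have := (((hasDerivAt_id (0:ℝ)).const_mul 2).const_add (2*a)).mul_const (-β)
      refine this.congr_deriv ?_; ring
    have h3 : HasDerivAt (fun s : ℝ => (r2 + 2*a*s + s^2 + y^2) ^ (-β-1))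
        ((2*a + 2*0) * (-β-1) * (r2 + 2*a*0 + 0^2 + y^2) ^ (-β-1-1)) 0 :=
      (hq 0).rpow_const (Or.inl (hpos 0).ne')
    exact (h1.mul h3).const_mul C
  rw [iteratedDeriv_succ, iteratedDeriv_one, hD, h2.deriv]
  have e0 : r2 + 2*a*0 + 0^2 + y^2 = r2 + y^2 := by ring
  rw [e0]
  have e1 : -β-1-1 = -β-2 := by ring
  rw [e1]
  ring

lemma yparts (r2 α β y : ℝ) (hy : 0 < y) (hr : 0 ≤ r2) :
    deriv (fun s : ℝ => (y+s)^(α+1) / (r2+(y+s)^2)^β) 0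
      = (α+1)*y^α*(r2+y^2)^(-β) - 2*β*y*y^(α+1)*(r2+y^2)^(-β-1)
    ∧ iteratedDeriv 2 (fun s : ℝ => (y+s)^(α+1) / (r2+(y+s)^2)^β) 0
      = α*(α+1)*y^(α-1)*(r2+y^2)^(-β) - 4*β*(α+1)*y*y^α*(r2+y^2)^(-β-1)
        - 2*β*y^(α+1)*(r2+y^2)^(-β-1) + 4*β*(β+1)*y^2*y^(α+1)*(r2+y^2)^(-β-2) := by
  set H : ℝ → ℝ := fun s => (y+s)^(α+1) / (r2+(y+s)^2)^β with hH
  set p₁ : ℝ → ℝ := fun s => (y+s)^(α+1) * (r2+(y+s)^2)^(-β) with hp₁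
  set f₁ : ℝ → ℝ := fun s =>
    (1*(α+1)*(y+s)^(α+1-1)) * (r2+(y+s)^2)^(-β)
    + (y+s)^(α+1) * ((2*(y+s)*1)*(-β) * (r2+(y+s)^2)^(-β-1)) with hf₁
  have hmem : Set.Ioi (-y) ∈ nhds (0:ℝ) := Ioi_mem_nhds (by linarith)
  have hbase : ∀ s ∈ Set.Ioi (-y), 0 < y + s := fun s hs => by
    simp only [Set.mem_Ioi] at hs; linarith
  have hq : ∀ s ∈ Set.Ioi (-y), 0 < r2 + (y+s)^2 := fun s hs =>
    add_pos_of_nonneg_of_pos hr (pow_pos (hbase s hs) 2)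
  have hE : H =ᶠ[nhds (0:ℝ)] p₁ := Filter.eventually_of_mem hmem (fun s hs => by
    simp only [hH, hp₁]
    rw [Real.rpow_neg (hq s hs).le, div_eq_mul_inv])
  have hy1 : ∀ s : ℝ, HasDerivAt (fun s : ℝ => y + s) 1 s := fun s => by
    simpa using (hasDerivAt_id s).const_add y
  have hqd : ∀ s : ℝ, HasDerivAt (fun s : ℝ => r2 + (y+s)^2) (2*(y+s)*1) s := fun s => by
    have := (((hy1 s).pow 2)).const_add r2
    refine this.congr_deriv ?_; norm_num
  have hderiv : ∀ s ∈ Set.Ioi (-y), HasDerivAt p₁ (f₁ s) s := by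
    intro s hs
    have hA : HasDerivAt (fun s : ℝ => (y+s)^(α+1)) (1*(α+1)*(y+s)^(α+1-1)) s :=
      (hy1 s).rpow_const (Or.inl (hbase s hs).ne')
    have hB : HasDerivAt (fun s : ℝ => (r2+(y+s)^2)^(-β)) ((2*(y+s)*1)*(-β)*(r2+(y+s)^2)^(-β-1)) s :=
      (hqd s).rpow_const (Or.inl (hq s hs).ne')
    exact hA.mul hB
  have hDeq : deriv H =ᶠ[nhds (0:ℝ)] f₁ := by
    filter_upwards [hE.deriv, Filter.eventually_of_mem hmem hderiv] with s h1 h2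
    rw [h1, h2.deriv]
  have h0 : (0:ℝ) ∈ Set.Ioi (-y) := by simp only [Set.mem_Ioi]; linarith
  have hy0 : y + 0 ≠ 0 := by simpa using hy.ne'
  have hq0 : r2 + (y+0)^2 ≠ 0 := (hq 0 h0).ne'
  -- second derivative of f₁ at 0
  have hT1 : HasDerivAt (fun s : ℝ => (1*(α+1)*(y+s)^(α+1-1)) * (r2+(y+s)^2)^(-β))
      ((1*(α+1)*(1*(α+1-1)*(y+0)^(α+1-1-1))) * (r2+(y+0)^2)^(-β)
        + (1*(α+1)*(y+0)^(α+1-1)) * ((2*(y+0)*1)*(-β)*(r2+(y+0)^2)^(-β-1))) 0 := by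
    have hA : HasDerivAt (fun s : ℝ => 1*(α+1)*(y+s)^(α+1-1)) (1*(α+1)*(1*(α+1-1)*(y+0)^(α+1-1-1))) 0 :=
      (((hy1 0).rpow_const (Or.inl hy0)) : HasDerivAt (fun s : ℝ => (y+s)^(α+1-1)) _ 0).const_mul (1*(α+1))
    have hB : HasDerivAt (fun s : ℝ => (r2+(y+s)^2)^(-β)) ((2*(y+0)*1)*(-β)*(r2+(y+0)^2)^(-β-1)) 0 :=
      (hqd 0).rpow_const (Or.inl hq0)
    exact hA.mul hB
  have hT2 : HasDerivAt (fun s : ℝ => (y+s)^(α+1) * ((2*(y+s)*1)*(-β) * (r2+(y+s)^2)^(-β-1)))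
      ((1*(α+1)*(y+0)^(α+1-1)) * ((2*(y+0)*1)*(-β)*(r2+(y+0)^2)^(-β-1))
        + (y+0)^(α+1) * ((2*1)*(-β)*(r2+(y+0)^2)^(-β-1)
            + ((2*(y+0)*1)*(-β)) * ((2*(y+0)*1)*(-β-1)*(r2+(y+0)^2)^(-β-1-1)))) 0 := by
    have hA : HasDerivAt (fun s : ℝ => (y+s)^(α+1)) (1*(α+1)*(y+0)^(α+1-1)) 0 :=
      (hy1 0).rpow_const (Or.inl hy0)
    have hg1 : HasDerivAt (fun s : ℝ => (2*(y+s)*1)*(-β)) ((2*1)*(-β)) 0 := by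
      have := (((hy1 0).const_mul 2).mul_const 1).mul_const (-β)
      refine this.congr_deriv ?_
      ring
    have hB : HasDerivAt (fun s : ℝ => (r2+(y+s)^2)^(-β-1)) ((2*(y+0)*1)*(-β-1)*(r2+(y+0)^2)^(-β-1-1)) 0 :=
      (hqd 0).rpow_const (Or.inl hq0)
    exact hA.mul (hg1.mul hB)
  have key2 : iteratedDeriv 2 H 0 = deriv f₁ 0 := by
    rw [iteratedDeriv_succ, iteratedDeriv_one]
    exact hDeq.deriv_eq
  have key1 : deriv H 0 = f₁ 0 := hDeq.eq_of_nhds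
  constructor
  · rw [key1, hf₁]
    have e1 : α + 1 - 1 = α := by ring
    simp only [add_zero, e1]
    ring
  · rw [key2]
    have := (hT1.add hT2).deriv
    rw [hf₁]; erw [this]
    have e1 : α + 1 - 1 = α := by ring
    have e2 : α + 1 - 1 - 1 = α - 1 := by ring
    have e3 : -β - 1 - 1 = -β - 2 := by ring
    simp only [add_zero, e1, e2, e3]
    ring
theorem stmt2 (n : ℕ) (hn : 1 ≤ n) (α : ℝ) (hα : -1 < α)
    (u : EuclideanSpace ℝ (Fin n) → ℝ → ℝ)
    (hu : u = fun x y => y ^ (α + 1) / (‖x‖ ^ 2 + y ^ 2) ^ ((α + n + 1) / 2)) :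
    ∀ (x : EuclideanSpace ℝ (Fin n)) (y : ℝ), 0 < y →
      (∑ i : Fin n,
        iteratedDeriv 2 (fun s : ℝ => u (x + s • EuclideanSpace.single i (1 : ℝ)) y) 0)
      + iteratedDeriv 2 (fun s : ℝ => u x (y + s)) 0
      - (α / y) * deriv (fun s : ℝ => u x (y + s)) 0 = 0 := by
  intro x y hy
  set β : ℝ := (α + n + 1) / 2 with hβ
  set C : ℝ := y ^ (α + 1) with hC
  set r2 : ℝ := ‖x‖ ^ 2 with hr2
  have hr2nn : 0 ≤ r2 := by positivity
  -- norm expansion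
  have hnorm : ∀ (i : Fin n) (s : ℝ),
      ‖x + s • EuclideanSpace.single i (1:ℝ)‖^2 = r2 + 2*(x i)*s + s^2 := by
    intro i s
    rw [@norm_add_sq_real]
    simp [real_inner_smul_right, EuclideanSpace.inner_single_right, norm_smul, sq_abs]
    ring
  have hpos : ∀ (i : Fin n) (s : ℝ), 0 < r2 + 2*(x i)*s + s^2 + y^2 := by
    intro i s
    have h := hnorm i s
    nlinarith [sq_nonneg (‖x + s • EuclideanSpace.single i (1:ℝ)‖), pow_pos hy 2,
      sq_nonneg ‖x + s • EuclideanSpace.single i (1:ℝ)‖]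
  -- x-direction terms
  have hx : ∀ i : Fin n,
      iteratedDeriv 2 (fun s : ℝ => u (x + s • EuclideanSpace.single i (1 : ℝ)) y) 0
        = C * (2*(-β) * (r2+y^2)^(-β-1) + 4*(x i)^2*β*(β+1)*(r2+y^2)^(-β-2)) := by
    intro i
    have hfun : (fun s : ℝ => u (x + s • EuclideanSpace.single i (1 : ℝ)) y)
        = fun s : ℝ => C / (r2 + 2*(x i)*s + s^2 + y^2) ^ β := by
      funext s
      rw [hu]
      simp only [← hnorm i s, hC, hβ]
    rw [hfun]
    exact xsecond C r2 (x i) y β (hpos i)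
  -- the sum
  have hns : r2 = ∑ i, (x i)^2 := by
    rw [hr2, EuclideanSpace.norm_eq, Real.sq_sqrt (by positivity)]
    simp [sq_abs]
  have hsum : (∑ i : Fin n,
      iteratedDeriv 2 (fun s : ℝ => u (x + s • EuclideanSpace.single i (1 : ℝ)) y) 0)
      = (n:ℝ) * (C * (2*(-β) * (r2+y^2)^(-β-1))) + r2 * (4*C*β*(β+1)*(r2+y^2)^(-β-2)) := by
    rw [Finset.sum_congr rfl (fun i _ => hx i)]
    have : ∀ i : Fin n, C * (2*(-β) * (r2+y^2)^(-β-1) + 4*(x i)^2*β*(β+1)*(r2+y^2)^(-β-2))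
        = C * (2*(-β) * (r2+y^2)^(-β-1)) + (x i)^2 * (4*C*β*(β+1)*(r2+y^2)^(-β-2)) := by
      intro i; ring
    rw [Finset.sum_congr rfl (fun i _ => this i), Finset.sum_add_distrib, Finset.sum_const,
      ← Finset.sum_mul, ← hns]
    simp [mul_comm]
  -- y-direction
  have hfy : (fun s : ℝ => u x (y + s)) = fun s : ℝ => (y+s)^(α+1) / (r2+(y+s)^2)^β := by
    funext s
    rw [hu]
  have hyp := yparts r2 α β y hy hr2nn
  rw [hsum, hfy, hyp.1, hyp.2]
  -- algebraic cleanup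
  have hR : (0:ℝ) < r2 + y^2 := by positivity
  have ha1 : y ^ α = y ^ (α-1) * y := by
    have := Real.rpow_add_one hy.ne' (α-1)
    rwa [sub_add_cancel] at this
  have ha2 : y ^ (α+1) = y ^ (α-1) * y * y := by
    rw [Real.rpow_add_one hy.ne' α, ha1]
  have hb1 : (r2+y^2) ^ (-β-1) = (r2+y^2) ^ (-β-2) * (r2+y^2) := by
    have := Real.rpow_add_one hR.ne' (-β-2)
    rwa [show -β-2+1 = -β-1 by ring] at this
  have hb2 : (r2+y^2) ^ (-β) = (r2+y^2) ^ (-β-2) * (r2+y^2) * (r2+y^2) := by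
    have := Real.rpow_add_one hR.ne' (-β-1)
    rw [show -β-1+1 = -β by ring] at this
    rw [this, hb1]
  rw [hC, ha2, ha1, hb1, hb2, hβ]
  field_simp
  ring
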